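/- Let 0 < k_1 < k_2 < ... < k_n be integers and x_1,...,x_n elements of a commutative ring. Let V(k_1,...,k_n) be the generalized Vandermonde matrix with (i,j) entry x_i^{k_j - 1}. Then det V(k_1,...,k_n) = sgn(M) · det Q · det V(x_1,...,x_n), where sgn(M) = (-1)^{n(n-1)/2 + Σ_{i=1}^{n-1} k_i}, V(x_1,...,x_n) is the ordinary Vandermonde matrix, and Q is the square matrix of order k_n - n obtained from the k_n × (k_n + 1 - n) banded matrix P (whose column j has entries (-1)^{n-t} e_{n-t+1} in rows j, j+1, ..., j+n-1 for t = n, n-1, ..., 1, and entry -1 in row n+j) by deleting the rows with indices k_1, k_2, ..., k_{n-1}. -/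

import Mathlib

/-- The `k`-th elementary symmetric polynomial of `x_0, …, x_{m-1}`. -/
def esymmAux {R : Type*} [CommRing R] {m : ℕ} (x : Fin m → R) (k : ℕ) : R :=
  ∑ s ∈ Finset.powersetCard k Finset.univ, ∏ i ∈ s, x i


section AuxShuffle
open Equiv Finset

private lemma perm_fin_le_apply {N : ℕ} (g : Fin N → Fin N) (hg : StrictMono g) :
    ∀ m : ℕ, ∀ h : m < N, m ≤ (g ⟨m, h⟩ : ℕ) := by
  intro m
  induction m with
  | zero => intro h; exact Nat.zero_le _
  | succ m ih =>
    intro h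
    have hm : m < N := by omega
    have h2 := hg (show (⟨m, hm⟩ : Fin N) < ⟨m+1, h⟩ by simp [Fin.lt_def])
    rw [Fin.lt_def] at h2
    have h3 := ih hm
    omega

private lemma perm_eq_one_of_strictMono {N : ℕ} (π : Equiv.Perm (Fin N))
    (h : ∀ i j : Fin N, i < j → π i < π j) : π = 1 := by
  have hsm : StrictMono π := fun i j hij => h i j hij
  have hsm' : StrictMono (π.symm : Fin N → Fin N) := by
    intro i j hij
    by_contra hc
    push_neg at hc
    rcases eq_or_lt_of_le hc with h' | h'
    · exact absurd (π.symm.injective h'.symm ▸ rfl : i = j) hij.ne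
    · have := hsm h'
      simp only [Equiv.apply_symm_apply] at this
      exact absurd hij (not_lt.mpr this.le)
  ext i
  have h1 : (i : ℕ) ≤ (π i : ℕ) := by simpa using perm_fin_le_apply π hsm i i.isLt
  have h2 : (π i : ℕ) ≤ (i : ℕ) := by
    have := perm_fin_le_apply π.symm hsm' (π i) (π i).isLt
    simpa using this
  simp only [Perm.one_apply]
  omega

private lemma shuffle_sign (a : ℕ) : ∀ {N : ℕ} (π : Equiv.Perm (Fin N)),
    (∀ i j : Fin N, i < j → (j : ℕ) < a → π i < π j) →
    (∀ i j : Fin N, a ≤ (i : ℕ) → i < j → π i < π j) →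
    Equiv.Perm.sign π =
      (-1) ^ (∑ j ∈ Finset.univ.filter (fun j : Fin N => (j : ℕ) < a),
        ((π j : ℕ) + (j : ℕ))) := by
  induction a with
  | zero =>
    intro N π h1 h2
    have hπ : π = 1 := perm_eq_one_of_strictMono π (fun i j hij => h2 i j (Nat.zero_le _) hij)
    subst hπ
    simp
  | succ a ih =>
    intro N π h1 h2
    by_cases hN : a < N
    · -- main case
      set A : Fin N := ⟨a, hN⟩ with hA
      have hπAa : a ≤ (π A : ℕ) := by
        have hsub : (Finset.Iic A).image π ⊆ Finset.Iic (π A) := by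
          intro v hv
          simp only [Finset.mem_image, Finset.mem_Iic] at hv ⊢
          obtain ⟨t, ht, rfl⟩ := hv
          rcases eq_or_lt_of_le ht with h' | h'
          · rw [h']
          · exact (h1 t A h' (by simp [hA])).le
        have hcard := Finset.card_le_card hsub
        rw [Finset.card_image_of_injective _ π.injective, Fin.card_Iic, Fin.card_Iic] at hcard
        simpa [hA] using hcard
      set q : ℕ := (π A : ℕ) - a with hqdef
      have hq : (π A : ℕ) = a + q := by omega
      have haqN : a + q < N := by have := (π A).isLt; omega
      have hC1 : ∀ u : Fin N, a < (u : ℕ) → π u < π A → (u : ℕ) ≤ a + q := by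
        intro u hau hlt
        have hAu : A ≤ u := by rw [Fin.le_def]; simp [hA]; omega
        have hsub : ((Finset.Iic u) \ {A}).image π ⊆ Finset.Iio (π A) := by
          intro v hv
          simp only [Finset.mem_image, Finset.mem_sdiff, Finset.mem_Iic,
            Finset.mem_singleton, Finset.mem_Iio] at hv ⊢
          obtain ⟨t, ⟨htu, htA⟩, rfl⟩ := hv
          rcases lt_trichotomy t A with h' | h' | h'
          · exact h1 t A h' (by simp [hA])
          · exact absurd h' htA
          · rcases eq_or_lt_of_le htu with h'' | h''
            · rw [h'']; exact hlt
            · refine lt_trans (h2 t u ?_ h'') hlt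
              rw [Fin.lt_def] at h'
              simp only [hA] at h'
              omega
        have hcard := Finset.card_le_card hsub
        rw [Finset.card_image_of_injective _ π.injective,
          Finset.card_sdiff_of_subset (by simpa using hAu), Fin.card_Iic, Fin.card_Iio] at hcard
        simp at hcard
        omega
      have hC2 : ∀ u : Fin N, a < (u : ℕ) → (u : ℕ) ≤ a + q → π u < π A := by
        intro u hau hu
        by_contra hc
        push_neg at hc
        have hne : π A ≠ π u := by
          intro h'
          have hAu := π.injective h'
          have hval : a = (u : ℕ) := congrArg Fin.val hAu
          omega
        have hlt : π A < π u := lt_of_le_of_ne hc hne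
        have hsub : (insert A (Finset.Ici u)).image π ⊆ Finset.Ici (π A) := by
          intro v hv
          simp only [Finset.mem_image, Finset.mem_insert, Finset.mem_Ici] at hv ⊢
          obtain ⟨t, ht, rfl⟩ := hv
          rcases ht with rfl | ht
          · exact le_rfl
          · rcases eq_or_lt_of_le ht with h'' | h''
            · rw [← h'']; exact hlt.le
            · exact (lt_trans hlt (h2 u t (by omega) h'')).le
        have hcard := Finset.card_le_card hsub
        have hAnot : A ∉ Finset.Ici u := by
          simp only [Finset.mem_Ici, Fin.le_def, hA]
          omega
        rw [Finset.card_image_of_injective _ π.injective,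
          Finset.card_insert_of_notMem hAnot, Fin.card_Ici, Fin.card_Ici] at hcard
        have := u.isLt
        omega
      have hC2' : ∀ u : Fin N, a + q < (u : ℕ) → π A < π u := by
        intro u hu
        have hne : π A ≠ π u := by
          intro h'
          have hAu := π.injective h'
          have hval : a = (u : ℕ) := congrArg Fin.val hAu
          omega
        rcases lt_or_ge (π u) (π A) with h' | h'
        · exact absurd (hC1 u (by omega) h') (by omega)
        · exact lt_of_le_of_ne h' hne
      -- the cycle
      obtain ⟨b, hb⟩ : ∃ b, N = a + (b + 1) := ⟨N - a - 1, by omega⟩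
      set p : Fin N → Prop := fun t => a ≤ (t : ℕ) with hp
      have hpd : DecidablePred p := fun t => by rw [hp]; infer_instance
      let f : Fin (b + 1) ≃ Subtype p :=
        { toFun := fun i => ⟨⟨a + i, by have := i.isLt; omega⟩, by simp [hp]⟩
          invFun := fun t => ⟨(t : ℕ) - a, by have := t.1.isLt; have := t.2; simp [hp] at *; omega⟩
          left_inv := fun i => by ext; simp
          right_inv := fun t => by
            have := t.2
            simp [hp] at this
            ext
            simp
            omega }
      set qF : Fin (b + 1) := ⟨q, by omega⟩ with hqF
      set c : Equiv.Perm (Fin N) := (Fin.cycleRange qF).extendDomain f with hc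
      have hsignc : Equiv.Perm.sign c = (-1) ^ q := by
        rw [hc, Equiv.Perm.sign_extendDomain, Fin.sign_cycleRange]
      have hcval : ∀ t : Fin N, (c t : ℕ) =
          if (t : ℕ) < a then (t : ℕ) else if (t : ℕ) < a + q then (t : ℕ) + 1
          else if (t : ℕ) = a + q then a else (t : ℕ) := by
        intro t
        by_cases ht : a ≤ (t : ℕ)
        · rw [hc, Equiv.Perm.extendDomain_apply_subtype _ f ht]
          have hfs : f.symm ⟨t, ht⟩ = ⟨(t : ℕ) - a, by have := t.isLt; omega⟩ := rfl
          rw [hfs]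
          rcases lt_trichotomy ((t : ℕ) - a) q with h' | h' | h'
          · rw [Fin.cycleRange_of_lt (by rw [Fin.lt_def]; exact h')]
            have : ((f ((⟨(t : ℕ) - a, by have := t.isLt; omega⟩ : Fin (b+1)) + 1) : Subtype p) : Fin N).1
                = a + (((⟨(t : ℕ) - a, by have := t.isLt; omega⟩ : Fin (b+1)) + 1 : Fin (b+1)) : ℕ) := rfl
            rw [this]
            have hv : (((⟨(t : ℕ) - a, by have := t.isLt; omega⟩ : Fin (b+1)) + 1 : Fin (b+1)) : ℕ)
                = (t : ℕ) - a + 1 := by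
              rw [Fin.val_add_one_of_lt]
              rw [Fin.lt_def]
              simp [Fin.last]
              omega
            rw [hv]
            have h1t : ¬ (t : ℕ) < a := by omega
            rw [if_neg h1t, if_pos (by omega)]
            omega
          · rw [Fin.cycleRange_of_eq (by rw [Fin.ext_iff]; exact h')]
            have : ((f (0 : Fin (b+1)) : Subtype p) : Fin N).1 = a + ((0 : Fin (b+1)) : ℕ) := rfl
            rw [this]
            simp only [Fin.val_zero]
            rw [if_neg (by omega), if_neg (by omega), if_pos (by omega)]
            omega
          · rw [Fin.cycleRange_of_gt (by rw [Fin.lt_def]; exact h')]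
            have : ((f (⟨(t : ℕ) - a, by have := t.isLt; omega⟩ : Fin (b+1)) : Subtype p) : Fin N).1
                = a + ((t : ℕ) - a) := rfl
            rw [this]
            rw [if_neg (by omega), if_neg (by omega), if_neg (by omega)]
            omega
        · rw [hc, Equiv.Perm.extendDomain_apply_not_subtype _ f ht]
          rw [if_pos (by omega)]
      set π₂ : Equiv.Perm (Fin N) := π * c with hπ₂
      have h1₂ : ∀ i j : Fin N, i < j → (j : ℕ) < a → π₂ i < π₂ j := by
        intro i j hij hja
        have hci : c i = i := by
          have := hcval i
          rw [Fin.lt_def] at hij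
          have : (c i : ℕ) = (i : ℕ) := by rw [this]; rw [if_pos (by omega)]
          exact Fin.ext this
        have hcj : c j = j := by
          have := hcval j
          have : (c j : ℕ) = (j : ℕ) := by rw [this]; rw [if_pos (by omega)]
          exact Fin.ext this
        simp only [hπ₂, Equiv.Perm.mul_apply, hci, hcj]
        exact h1 i j hij (by omega)
      have h2₂ : ∀ i j : Fin N, a ≤ (i : ℕ) → i < j → π₂ i < π₂ j := by
        intro i j hi hij
        rw [Fin.lt_def] at hij
        have hci := hcval i
        have hcj := hcval j
        have hjN := j.isLt
        simp only [hπ₂, Equiv.Perm.mul_apply]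
        rcases lt_trichotomy (j : ℕ) (a + q) with hj' | hj' | hj'
        · -- both below a+q : c i = i+1, c j = j+1
          have hci' : (c i : ℕ) = (i : ℕ) + 1 := by rw [hci, if_neg (by omega), if_pos (by omega)]
          have hcj' : (c j : ℕ) = (j : ℕ) + 1 := by rw [hcj, if_neg (by omega), if_pos (by omega)]
          exact h2 (c i) (c j) (by omega) (by rw [Fin.lt_def]; omega)
        · -- j = a + q : c j = A, c i = i + 1
          have hci' : (c i : ℕ) = (i : ℕ) + 1 := by rw [hci, if_neg (by omega), if_pos (by omega)]
          have hcj' : c j = A := by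
            apply Fin.ext
            rw [hcj, if_neg (by omega), if_neg (by omega), if_pos (by omega)]
          rw [hcj']
          exact hC2 (c i) (by omega) (by omega)
        · -- j > a + q : c j = j
          have hcj' : c j = j := by
            apply Fin.ext
            rw [hcj, if_neg (by omega), if_neg (by omega), if_neg (by omega)]
          rw [hcj']
          rcases lt_trichotomy (i : ℕ) (a + q) with hi' | hi' | hi'
          · have hci' : (c i : ℕ) = (i : ℕ) + 1 := by
              rw [hci, if_neg (by omega), if_pos (by omega)]
            exact h2 (c i) j (by omega) (by rw [Fin.lt_def]; omega)
          · have hci' : c i = A := by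
              apply Fin.ext
              rw [hci, if_neg (by omega), if_neg (by omega), if_pos (by omega)]
            rw [hci']
            exact hC2' j (by omega)
          · have hci' : c i = i := by
              apply Fin.ext
              rw [hci, if_neg (by omega), if_neg (by omega), if_neg (by omega)]
            rw [hci']
            exact h2 i j (by omega) (by rw [Fin.lt_def]; omega)
      have hIH := ih π₂ h1₂ h2₂
      have hsum2 : ∑ j ∈ Finset.univ.filter (fun j : Fin N => (j : ℕ) < a), ((π₂ j : ℕ) + (j : ℕ))
          = ∑ j ∈ Finset.univ.filter (fun j : Fin N => (j : ℕ) < a), ((π j : ℕ) + (j : ℕ)) := by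
        refine Finset.sum_congr rfl fun t ht => ?_
        have hta : (t : ℕ) < a := by simpa using ht
        have hct : c t = t := Fin.ext (by rw [hcval t, if_pos hta])
        simp only [hπ₂, Equiv.Perm.mul_apply, hct]
      have hπdecomp : π = π₂ * c⁻¹ := by rw [hπ₂, mul_inv_cancel_right]
      have hsign : Equiv.Perm.sign π = Equiv.Perm.sign π₂ * (-1) ^ q := by
        rw [hπdecomp, map_mul, map_inv, hsignc, hIH]
        simp [inv_pow]
      have hfilter : Finset.univ.filter (fun j : Fin N => (j : ℕ) < a + 1)
          = insert A (Finset.univ.filter (fun j : Fin N => (j : ℕ) < a)) := by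
        ext t
        simp only [Finset.mem_filter, Finset.mem_univ, true_and, Finset.mem_insert, Fin.ext_iff, hA]
        omega
      rw [hfilter, Finset.sum_insert (by simp [hA]), hsign, hIH, hsum2]
      rw [hq]
      have hee : a + q + (a : ℕ) = q + 2 * a := by omega
      rw [show ((A : Fin N) : ℕ) = a from rfl, hee, pow_add, pow_add, pow_mul, Int.units_sq, one_pow, mul_one]
      exact mul_comm _ _
    · -- degenerate: N ≤ a
      have hπ : π = 1 := perm_eq_one_of_strictMono π
        (fun i j hij => h1 i j hij (by have := j.isLt; omega))
      subst hπ
      simp only [map_one, Equiv.Perm.one_apply]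
      have : ∑ j ∈ Finset.univ.filter (fun j : Fin N => (j : ℕ) < a + 1), ((j : ℕ) + (j : ℕ))
          = 2 * ∑ j ∈ Finset.univ.filter (fun j : Fin N => (j : ℕ) < a + 1), (j : ℕ) := by
        rw [Finset.mul_sum]
        exact Finset.sum_congr rfl fun _ _ => by omega
      rw [this, pow_mul]
      norm_num

end AuxShuffle

section AuxVieta
open Finset Polynomial

private lemma esymmAux_vieta {R : Type*} [CommRing R] {n : ℕ} (x : Fin (n+1) → R) (i : Fin (n+1)) :
    (x i) ^ (n+1) = ∑ d ∈ Finset.range (n+1), (-1:R)^(n-d) * esymmAux x ((n+1)-d) * (x i)^d := by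
  nontriviality R
  have hcard : (Finset.univ : Finset (Fin (n+1))).card = n+1 := by simp
  have hcoeff : ∀ kk : ℕ, kk ≤ n+1 →
      (∏ m : Fin (n+1), (X + C (-x m))).coeff kk = (-1:R)^(n+1-kk) * esymmAux x (n+1-kk) := by
    intro kk hkk
    rw [Finset.prod_X_add_C_coeff _ _ (by simpa [hcard] using hkk)]
    rw [esymmAux, Finset.mul_sum, hcard]
    refine Finset.sum_congr rfl fun t ht => ?_
    have htc : t.card = n+1-kk := (Finset.mem_powersetCard.mp ht).2
    calc ∏ j ∈ t, -x j = (∏ _j ∈ t, (-1:R)) * ∏ j ∈ t, x j := by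
          rw [← Finset.prod_mul_distrib]; simp
      _ = (-1:R)^(n+1-kk) * ∏ j ∈ t, x j := by rw [Finset.prod_const, htc]
  set P : Polynomial R := ∏ m : Fin (n+1), (X + C (-x m)) with hPdef
  have hmon : ∀ m ∈ Finset.univ, (X + C (-x m)).Monic := fun m _ => monic_X_add_C _
  have hdeg : P.natDegree = n+1 := by
    rw [hPdef, Polynomial.natDegree_prod_of_monic _ _ hmon]
    rw [Finset.sum_congr rfl fun m _ => Polynomial.natDegree_X_add_C (-x m)]
    simp
  have heval : P.eval (x i) = 0 := by
    rw [hPdef, Polynomial.eval_prod]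
    refine Finset.prod_eq_zero (Finset.mem_univ i) ?_
    simp
  rw [Polynomial.eval_eq_sum_range' (show P.natDegree < n+2 by omega)] at heval
  rw [Finset.sum_range_succ] at heval
  have htop : P.coeff (n+1) = 1 := by
    have hm : P.Monic := Polynomial.monic_prod_of_monic _ _ hmon
    rw [← hdeg]
    exact hm.coeff_natDegree
  rw [htop, one_mul] at heval
  have hx : (x i)^(n+1) = -∑ d ∈ range (n+1), P.coeff d * (x i)^d :=
    eq_neg_of_add_eq_zero_right heval
  rw [hx, ← Finset.sum_neg_distrib]
  refine Finset.sum_congr rfl fun d hd => ?_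
  have hd' : d < n+1 := Finset.mem_range.mp hd
  rw [hcoeff d (by omega)]
  have : n+1-d = (n-d)+1 := by omega
  rw [this, pow_succ]
  ring

private lemma band_sum {R : Type*} [CommRing R] {n : ℕ} (x : Fin (n+1) → R) (i : Fin (n+1))
    {K : ℕ} (j : ℕ) (hj : j + (n+1) < K) :
    ∑ t ∈ Finset.range K, (x i)^t *
      (if j ≤ t ∧ t < j + (n+1) then (-1:R)^(n-(t-j)) * esymmAux x ((n+1)-(t-j))
       else if t = j + (n+1) then -1 else 0) = 0 := by
  have hsub : Finset.Ico j (j+(n+2)) ⊆ Finset.range K := by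
    intro t ht
    simp only [Finset.mem_Ico] at ht
    simp only [Finset.mem_range]
    omega
  have hzero : ∀ t ∈ Finset.range K, t ∉ Finset.Ico j (j+(n+2)) →
      (x i)^t * (if j ≤ t ∧ t < j + (n+1) then (-1:R)^(n-(t-j)) * esymmAux x ((n+1)-(t-j))
       else if t = j + (n+1) then -1 else 0) = 0 := by
    intro t _ ht
    simp only [Finset.mem_Ico, not_and, not_lt] at ht
    rw [if_neg (by omega), if_neg (by omega), mul_zero]
  rw [← Finset.sum_subset hsub hzero]
  rw [Finset.sum_Ico_eq_sum_range]
  have h1 : j + (n+2) - j = n+2 := by omega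
  rw [h1, Finset.sum_range_succ]
  have hmain : ∑ d ∈ range (n+1), (x i)^(j+d) *
      (if j ≤ j+d ∧ j+d < j + (n+1) then (-1:R)^(n-(j+d-j)) * esymmAux x ((n+1)-(j+d-j))
       else if j+d = j + (n+1) then -1 else 0)
      = (x i)^j * ∑ d ∈ range (n+1), (-1:R)^(n-d) * esymmAux x ((n+1)-d) * (x i)^d := by
    rw [Finset.mul_sum]
    refine Finset.sum_congr rfl fun d hd => ?_
    have hd' : d < n+1 := Finset.mem_range.mp hd
    rw [if_pos ⟨by omega, by omega⟩]
    have h2 : j + d - j = d := by omega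
    rw [h2, pow_add]
    ring
  rw [hmain, ← esymmAux_vieta]
  rw [if_neg (by omega), if_pos rfl]
  rw [← pow_add]
  ring

end AuxVieta

/-- the generalized Vandermonde determinant.
With `n+1` variables, exponents `0 < k_0 < ⋯ < k_n` and `K = k_n`, we have
`det V(k) = (-1)^{n(n+1)/2 + Σ_{i<n} k_i} · det Q · det V(x)`, where `Q` is obtained
from the banded matrix `P` (with `K-1` rows and `K-(n+1)` columns, column `j` carrying
the coefficients `(-1)^{n-t} e_{n-t+1}` in rows `j, …, j+n` and `-1` in row `j+n+1`,
rows `1`-based) by deleting the rows with (`1`-based) indices `k_0, …, k_{n-1}`;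
the strictly monotone map `ρ` enumerates the remaining rows. -/
theorem stmt11 {R : Type*} [CommRing R] (n : ℕ) (k : Fin (n+1) → ℕ)
    (hk0 : 0 < k 0) (hk : StrictMono k) (x : Fin (n+1) → R)
    (K : ℕ) (hK : K = k (Fin.last n))
    (P : Matrix (Fin (K-1)) (Fin (K-(n+1))) R)
    (hP : ∀ i j, P i j =
      if (j : ℕ) ≤ (i : ℕ) ∧ (i : ℕ) < (j : ℕ) + (n+1) then
        (-1 : R) ^ (n - ((i : ℕ) - (j : ℕ))) * esymmAux x ((n+1) - ((i : ℕ) - (j : ℕ)))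
      else if (i : ℕ) = (j : ℕ) + (n+1) then -1 else 0)
    (ρ : Fin (K-(n+1)) → Fin (K-1)) (hρ : StrictMono ρ)
    (hρk : ∀ s, ∀ i : Fin (n+1), (i : ℕ) < n → (ρ s : ℕ) + 1 ≠ k i) :
    (Matrix.of fun i j : Fin (n+1) => x i ^ (k j - 1)).det
      = (-1 : R) ^ ((n+1) * n / 2 + ∑ i : Fin n, k (Fin.castSucc i)) *
          (P.submatrix ρ id).det * (Matrix.vandermonde x).det := by
  classical
  -- basic numeric facts
  have hk1 : ∀ m : ℕ, ∀ h : m < n+1, k 0 + m ≤ k ⟨m, h⟩ := by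
    intro m
    induction m with
    | zero => intro h; simp
    | succ m ih =>
      intro h
      have hm : m < n+1 := by omega
      have h2 := hk (show (⟨m, hm⟩ : Fin (n+1)) < ⟨m+1, h⟩ by simp [Fin.lt_def])
      have h3 := ih hm
      omega
  have hkpos : ∀ j : Fin (n+1), 1 ≤ k j := by
    intro j
    have := hk1 (j : ℕ) j.isLt
    simp only [Fin.eta] at this
    omega
  have hKlast : K = k (Fin.last n) := hK
  have hKn : n + 1 ≤ K := by
    have h := hk1 n (Nat.lt_succ_self n)
    rw [show (⟨n, Nat.lt_succ_self n⟩ : Fin (n+1)) = Fin.last n from rfl] at h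
    omega
  have hklast : ∀ j : Fin (n+1), k j ≤ K := by
    intro j
    rw [hK]
    exact hk.monotone (Fin.le_last j)
  have hbK : (n+1) + (K - (n+1)) = K := by omega
  -- the index equivalence
  set ν : (Fin (n+1) ⊕ Fin (K-(n+1))) ≃ Fin K := finSumFinEquiv.trans (finCongr hbK) with hν
  have hν1 : ∀ i : Fin (n+1), (ν (Sum.inl i) : ℕ) = (i : ℕ) := by intro i; simp [hν]
  have hν2 : ∀ s : Fin (K-(n+1)), (ν (Sum.inr s) : ℕ) = (n+1) + (s : ℕ) := by intro s; simp [hν]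
  -- matrices
  set Phat : ℕ → ℕ → R := fun t j =>
    if j ≤ t ∧ t < j + (n+1) then (-1:R)^(n-(t-j)) * esymmAux x ((n+1)-(t-j))
    else if t = j + (n+1) then -1 else 0 with hPhat
  set W : Matrix (Fin (n+1) ⊕ Fin (K-(n+1))) (Fin (n+1) ⊕ Fin (K-(n+1))) R :=
    Matrix.of fun r c =>
      Sum.elim (fun i => x i ^ ((ν c : ℕ)))
        (fun s => if (ν c : ℕ) = (ρ s : ℕ) then (1:R) else 0) r with hW
  set N2 : Matrix (Fin (n+1) ⊕ Fin (K-(n+1))) (Fin (n+1) ⊕ Fin (K-(n+1))) R :=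
    Matrix.of fun r c =>
      Sum.elim (fun (j : Fin (n+1)) => if (ν r : ℕ) = (j : ℕ) then (1:R) else 0)
        (fun (j : Fin (K-(n+1))) => Phat ((ν r : ℕ)) ((j : ℕ))) c with hN2
  set BB : Matrix (Fin (K-(n+1))) (Fin (n+1)) R :=
    Matrix.of fun s j => if (ρ s : ℕ) = (j : ℕ) then (1:R) else 0 with hBB
  -- STEP 1 : W * N2 = fromBlocks (vandermonde x) 0 BB Q
  have hstep1 : W * N2 =
      Matrix.fromBlocks (Matrix.vandermonde x) 0 BB (P.submatrix ρ id) := by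
    ext r c
    rw [Matrix.mul_apply]
    cases r with
    | inl i =>
      cases c with
      | inl j =>
        have hjK : (j : ℕ) < K := lt_of_lt_of_le j.isLt hKn
        rw [Finset.sum_eq_single (ν.symm ⟨(j : ℕ), hjK⟩)]
        · simp only [hW, hN2, Matrix.of_apply, Sum.elim_inl, Equiv.apply_symm_apply]
          simp [Matrix.fromBlocks_apply₁₁, Matrix.vandermonde_apply]
        · intro m _ hm
          simp only [hW, hN2, Matrix.of_apply, Sum.elim_inl]
          rw [if_neg, mul_zero]
          intro hcon
          exact hm (by rw [← Equiv.symm_apply_apply ν m]; congr 1; exact Fin.ext hcon)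
        · intro h; exact absurd (Finset.mem_univ _) h
      | inr j =>
        have hjb : (j : ℕ) + (n+1) < K := by have := j.isLt; omega
        have hband := band_sum x i (K := K) (j : ℕ) hjb
        have hconv : ∑ m, W (Sum.inl i) m * N2 m (Sum.inr j)
            = ∑ t : Fin K, (x i)^(t:ℕ) * Phat (t:ℕ) (j:ℕ) := by
          rw [← Equiv.sum_comp ν.symm (fun m => W (Sum.inl i) m * N2 m (Sum.inr j))]
          refine Finset.sum_congr rfl fun t _ => ?_
          simp only [hW, hN2, Matrix.of_apply, Sum.elim_inl, Sum.elim_inr,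
            Equiv.apply_symm_apply]
        rw [hconv]
        rw [Fin.sum_univ_eq_sum_range (fun t => (x i)^t * Phat t (j:ℕ)) K]
        simp only [Matrix.fromBlocks_apply₁₂, Matrix.zero_apply]
        simp only [hPhat]
        exact hband
    | inr s =>
      have hsK : (ρ s : ℕ) < K := by have := (ρ s).isLt; omega
      cases c with
      | inl j =>
        rw [Finset.sum_eq_single (ν.symm ⟨(ρ s : ℕ), hsK⟩)]
        · simp only [hW, hN2, Matrix.of_apply, Sum.elim_inr, Sum.elim_inl,
            Equiv.apply_symm_apply]
          rw [if_true, one_mul]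
          simp [Matrix.fromBlocks_apply₂₁, hBB]
        · intro m _ hm
          simp only [hW, Matrix.of_apply, Sum.elim_inr]
          rw [if_neg, zero_mul]
          intro hcon
          exact hm (by
            have : ν m = ⟨(ρ s : ℕ), hsK⟩ := Fin.ext hcon
            rw [← Equiv.symm_apply_apply ν m, this])
        · intro h; exact absurd (Finset.mem_univ _) h
      | inr j =>
        rw [Finset.sum_eq_single (ν.symm ⟨(ρ s : ℕ), hsK⟩)]
        · simp only [hW, hN2, Matrix.of_apply, Sum.elim_inr, Equiv.apply_symm_apply]
          rw [if_true, one_mul]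
          simp only [Matrix.fromBlocks_apply₂₂, Matrix.submatrix_apply, id_eq]
          rw [hP (ρ s) j]
        · intro m _ hm
          simp only [hW, Matrix.of_apply, Sum.elim_inr]
          rw [if_neg, zero_mul]
          intro hcon
          exact hm (by
            have : ν m = ⟨(ρ s : ℕ), hsK⟩ := Fin.ext hcon
            rw [← Equiv.symm_apply_apply ν m, this])
        · intro h; exact absurd (Finset.mem_univ _) h
  -- STEP 2 : det N2 = (-1)^(K-(n+1))
  have hsymm1 : ∀ t : Fin K, ∀ ht : (t : ℕ) < n+1, ν.symm t = Sum.inl ⟨(t:ℕ), ht⟩ := by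
    intro t ht
    rw [Equiv.symm_apply_eq]
    exact Fin.ext ((hν1 ⟨(t:ℕ), ht⟩).symm)
  have hsymm2 : ∀ t : Fin K, ∀ ht : n+1 ≤ (t : ℕ), ν.symm t
      = Sum.inr ⟨(t:ℕ) - (n+1), by have := t.isLt; omega⟩ := by
    intro t ht
    rw [Equiv.symm_apply_eq]
    refine Fin.ext ?_
    rw [hν2]
    simp
    omega
  have hdetN2 : N2.det = (-1:R)^(K-(n+1)) := by
    rw [← Matrix.det_submatrix_equiv_self ν.symm N2]
    have htri : (N2.submatrix ν.symm ν.symm).BlockTriangular id := by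
      intro t u hut
      simp only [id_eq] at hut
      by_cases hu : (u : ℕ) < n+1
      · rw [Matrix.submatrix_apply, hsymm1 u hu]
        simp only [hN2, Matrix.of_apply, Sum.elim_inl, Equiv.apply_symm_apply]
        rw [Fin.lt_def] at hut
        rw [if_neg (by omega)]
      · push_neg at hu
        rw [Matrix.submatrix_apply, hsymm2 u hu]
        simp only [hN2, Matrix.of_apply, Sum.elim_inr]
        rw [Fin.lt_def] at hut
        have hub := u.isLt
        simp only [Equiv.apply_symm_apply, hPhat]
        rw [if_neg (by omega), if_neg (by omega)]
    rw [Matrix.det_of_upperTriangular htri]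
    have hdiag : ∀ t : Fin K, (N2.submatrix ν.symm ν.symm) t t
        = if (t : ℕ) < n+1 then (1:R) else -1 := by
      intro t
      by_cases ht : (t : ℕ) < n+1
      · rw [Matrix.submatrix_apply, hsymm1 t ht]
        simp only [hN2, Matrix.of_apply, Sum.elim_inl]
        rw [if_pos (by rw [hν1]), if_pos ht]
      · push_neg at ht
        rw [Matrix.submatrix_apply, hsymm2 t ht]
        simp only [hN2, Matrix.of_apply, Sum.elim_inr, hPhat]
        have htb := t.isLt
        rw [hν2]
        simp only [Fin.val_mk]
        rw [if_neg (by omega), if_pos (by omega), if_neg (by omega)]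
    rw [Finset.prod_congr rfl (fun t _ => hdiag t)]
    rw [Fin.prod_univ_eq_prod_range (fun t => if t < n+1 then (1:R) else -1) K]
    rw [Finset.range_eq_Ico, ← Finset.prod_Ico_consecutive _ (Nat.zero_le (n+1)) hKn]
    have hfirst : ∏ t ∈ Finset.Ico 0 (n+1), (if t < n+1 then (1:R) else -1) = 1 := by
      apply Finset.prod_eq_one
      intro t ht
      simp only [Finset.mem_Ico] at ht
      rw [if_pos ht.2]
    have hsecond : ∏ t ∈ Finset.Ico (n+1) K, (if t < n+1 then (1:R) else -1)
        = (-1:R)^(K-(n+1)) := by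
      rw [Finset.prod_congr rfl (fun t ht => by
        simp only [Finset.mem_Ico] at ht
        rw [if_neg (by omega)])]
      rw [Finset.prod_const, Nat.card_Ico]
    rw [hfirst, hsecond, one_mul]
  -- STEP 3 : the permutation
  have hτv1 : ∀ j : Fin (n+1), k j - 1 < K := by
    intro j; have := hklast j; have := hkpos j; omega
  have hτv2 : ∀ s : Fin (K-(n+1)), (ρ s : ℕ) < K := by
    intro s; have := (ρ s).isLt; omega
  set τ : (Fin (n+1) ⊕ Fin (K-(n+1))) → Fin K :=
    Sum.elim (fun j => ⟨k j - 1, hτv1 j⟩) (fun s => ⟨(ρ s : ℕ), hτv2 s⟩) with hτ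
  have hρk' : ∀ (s : Fin (K-(n+1))) (j : Fin (n+1)), (ρ s : ℕ) ≠ k j - 1 := by
    intro s j
    by_cases hj : (j : ℕ) < n
    · have h1 := hρk s j hj
      have h2 := hkpos j
      omega
    · have hj' : (j : ℕ) = n := by have := j.isLt; omega
      have hje : j = Fin.last n := Fin.ext (by simpa using hj')
      have h2 := (ρ s).isLt
      rw [hje, ← hK]
      omega
  have hτinj : Function.Injective τ := by
    intro u v huv
    have hval := congrArg Fin.val huv
    cases u with
    | inl i =>
      cases v with
      | inl j =>
        simp only [hτ, Sum.elim_inl] at hval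
        have : k i = k j := by have := hkpos i; have := hkpos j; omega
        exact congrArg Sum.inl (hk.injective this)
      | inr s =>
        simp only [hτ, Sum.elim_inl, Sum.elim_inr] at hval
        exact absurd hval.symm (hρk' s i)
    | inr s =>
      cases v with
      | inl j =>
        simp only [hτ, Sum.elim_inl, Sum.elim_inr] at hval
        exact absurd hval (hρk' s j)
      | inr s' =>
        simp only [hτ, Sum.elim_inr] at hval
        exact congrArg Sum.inr (hρ.injective (Fin.ext hval))
  have hτbij : Function.Bijective τ := by
    rw [Fintype.bijective_iff_injective_and_card]
    exact ⟨hτinj, by simp [hbK]⟩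
  set τ' : (Fin (n+1) ⊕ Fin (K-(n+1))) ≃ Fin K := Equiv.ofBijective τ hτbij with hτ'
  set σ : Equiv.Perm (Fin (n+1) ⊕ Fin (K-(n+1))) := τ'.trans ν.symm with hσ
  have hνσ : ∀ c, ν (σ c) = τ c := by
    intro c
    simp [hσ, hτ', Equiv.trans_apply, Equiv.apply_symm_apply, Equiv.ofBijective_apply]
  set Vk : Matrix (Fin (n+1)) (Fin (n+1)) R :=
    Matrix.of (fun i j : Fin (n+1) => x i ^ (k j - 1)) with hVk
  have hstep3 : W.submatrix id σ =
      Matrix.fromBlocks Vk (Matrix.of fun (i : Fin (n+1)) (s : Fin (K-(n+1))) => x i ^ (ρ s : ℕ)) 0 1 := by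
    ext r c
    rw [Matrix.submatrix_apply, id_eq]
    cases r with
    | inl i =>
      cases c with
      | inl j =>
        simp only [hW, Matrix.of_apply, Sum.elim_inl]
        rw [hνσ]
        simp only [hτ, Sum.elim_inl, Matrix.fromBlocks_apply₁₁, hVk, Matrix.of_apply]
      | inr s =>
        simp only [hW, Matrix.of_apply, Sum.elim_inl]
        rw [hνσ]
        simp only [hτ, Sum.elim_inr, Matrix.fromBlocks_apply₁₂, Matrix.of_apply]
    | inr s =>
      cases c with
      | inl j =>
        simp only [hW, Matrix.of_apply, Sum.elim_inr]
        rw [hνσ]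
        simp only [hτ, Sum.elim_inl, Matrix.fromBlocks_apply₂₁, Matrix.zero_apply]
        rw [if_neg]
        intro hcon
        exact (hρk' s j) hcon.symm
      | inr s' =>
        simp only [hW, Matrix.of_apply, Sum.elim_inr]
        rw [hνσ]
        simp only [hτ, Sum.elim_inr, Matrix.fromBlocks_apply₂₂, Matrix.one_apply]
        by_cases hss : s' = s
        · rw [hss, if_pos rfl, if_pos rfl]
        · rw [if_neg, if_neg (by exact fun h => hss (h.symm ▸ rfl))]
          · intro hcon
            exact hss (hρ.injective (Fin.ext hcon))
  -- determinant relations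
  have hmul : W.det * N2.det = (Matrix.vandermonde x).det * (P.submatrix ρ id).det := by
    rw [← Matrix.det_mul, hstep1, Matrix.det_fromBlocks_zero₁₂]
  have hperm := Matrix.det_permute' σ W
  rw [hstep3, Matrix.det_fromBlocks_zero₂₁, Matrix.det_one, mul_one] at hperm
  -- the sign
  set πK : Equiv.Perm (Fin K) := Equiv.permCongr ν σ with hπK
  have hsσ : Equiv.Perm.sign σ = Equiv.Perm.sign πK := (Equiv.Perm.sign_permCongr ν σ).symm
  have hπKval : ∀ t : Fin K, πK t = τ (ν.symm t) := by
    intro t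
    simp only [hπK, Equiv.permCongr_apply, hσ, Equiv.trans_apply, Equiv.apply_symm_apply]
    rfl
  have hπlow : ∀ t : Fin K, ∀ ht : (t:ℕ) < n+1, (πK t : ℕ) = k ⟨(t:ℕ), ht⟩ - 1 := by
    intro t ht
    rw [hπKval, hsymm1 t ht]
    simp only [hτ, Sum.elim_inl]
  have hπhigh : ∀ t : Fin K, ∀ ht : n+1 ≤ (t:ℕ),
      (πK t : ℕ) = (ρ ⟨(t:ℕ)-(n+1), by have := t.isLt; omega⟩ : ℕ) := by
    intro t ht
    rw [hπKval, hsymm2 t ht]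
    simp only [hτ, Sum.elim_inr]
  have hsh1 : ∀ i j : Fin K, i < j → (j : ℕ) < n+1 → πK i < πK j := by
    intro i j hij hj
    rw [Fin.lt_def] at hij
    have hi : (i:ℕ) < n+1 := by omega
    rw [Fin.lt_def, hπlow i hi, hπlow j hj]
    have hlt := hk (show (⟨(i:ℕ), hi⟩ : Fin (n+1)) < ⟨(j:ℕ), hj⟩ by
      rw [Fin.lt_def]; simpa using hij)
    have hp1 := hkpos ⟨(i:ℕ), hi⟩
    omega
  have hsh2 : ∀ i j : Fin K, n+1 ≤ (i : ℕ) → i < j → πK i < πK j := by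
    intro i j hi hij
    rw [Fin.lt_def] at hij
    have hj : n+1 ≤ (j:ℕ) := by omega
    rw [Fin.lt_def, hπhigh i hi, hπhigh j hj]
    have := hρ (show (⟨(i:ℕ)-(n+1), by have := i.isLt; omega⟩ : Fin (K-(n+1)))
        < ⟨(j:ℕ)-(n+1), by have := j.isLt; omega⟩ by
      rw [Fin.lt_def]; simp only [Fin.val_mk]; omega)
    rw [Fin.lt_def] at this
    exact this
  have hsign := shuffle_sign (n+1) πK hsh1 hsh2
  -- reindex the exponent sum
  have hEsum : ∑ t ∈ Finset.univ.filter (fun t : Fin K => (t:ℕ) < n+1), ((πK t : ℕ) + (t:ℕ))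
      = ∑ j : Fin (n+1), ((k j - 1) + (j:ℕ)) := by
    refine Finset.sum_bij' (fun (t : Fin K) (ht : t ∈ Finset.univ.filter (fun t : Fin K => (t:ℕ) < n+1)) =>
        (⟨(t:ℕ), by simpa using ht⟩ : Fin (n+1)))
      (fun (j' : Fin (n+1)) _ => (⟨(j':ℕ), lt_of_lt_of_le j'.isLt hKn⟩ : Fin K)) ?_ ?_ ?_ ?_ ?_
    · intro t ht; exact Finset.mem_univ _
    · intro j' hj'; simp; have := j'.isLt; omega
    · intro t ht; exact Fin.ext rfl
    · intro j' hj'; exact Fin.ext rfl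
    · intro t ht
      have ht' : (t:ℕ) < n+1 := by simpa using ht
      rw [hπlow t ht']
  -- Gauss sum facts
  have hg2 : (∑ j : Fin (n+1), (j:ℕ)) * 2 = (n+1) * n := by
    rw [Fin.sum_univ_eq_sum_range (fun m => m) (n+1), Finset.sum_range_id_mul_two]
    simp
  have hG : (n+1) * n / 2 = ∑ j : Fin (n+1), (j:ℕ) := by
    rw [← hg2, Nat.mul_div_cancel _ (by norm_num : (0:ℕ) < 2)]
  have hsplit : ∑ j : Fin (n+1), ((k j - 1) + (j:ℕ))
      = (∑ j : Fin (n+1), (k j - 1)) + ∑ j : Fin (n+1), (j:ℕ) := Finset.sum_add_distrib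
  have hsub : (∑ j : Fin (n+1), (k j - 1)) + (n+1) = ∑ j : Fin (n+1), k j := by
    have h1 : ∑ j : Fin (n+1), ((k j - 1) + 1) = ∑ j : Fin (n+1), k j :=
      Finset.sum_congr rfl (fun j _ => by have := hkpos j; omega)
    rw [Finset.sum_add_distrib] at h1
    simpa using h1
  have hlastsplit : ∑ j : Fin (n+1), k j = (∑ i : Fin n, k (Fin.castSucc i)) + K := by
    rw [Fin.sum_univ_castSucc, hK]
  -- put the sign into R
  have hεval : ((Equiv.Perm.sign σ : ℤ) : R)
      = (-1:R) ^ (∑ j : Fin (n+1), ((k j - 1) + (j:ℕ))) := by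
    rw [hsσ, hsign, hEsum]
    push_cast
    norm_num
  rw [hεval] at hperm
  rw [hdetN2] at hmul
  have hsq : (-1:R)^(K-(n+1)) * (-1:R)^(K-(n+1)) = 1 := by
    rw [← pow_add, ← two_mul, pow_mul]
    norm_num
  have hC : (-1:R) ^ (∑ j : Fin (n+1), ((k j - 1) + (j:ℕ))) * (-1:R)^(K-(n+1))
      = (-1:R) ^ ((n+1) * n / 2 + ∑ i : Fin n, k (Fin.castSucc i)) := by
    rw [← pow_add]
    have hexp : (∑ j : Fin (n+1), ((k j - 1) + (j:ℕ))) + (K-(n+1))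
        = ((n+1) * n / 2 + ∑ i : Fin n, k (Fin.castSucc i)) + 2*(K-(n+1)) := by
      rw [hG]
      omega
    rw [hexp, pow_add, pow_mul]
    norm_num
  calc Vk.det
      = (-1:R) ^ (∑ j : Fin (n+1), ((k j - 1) + (j:ℕ))) * W.det := hperm
    _ = (-1:R) ^ (∑ j : Fin (n+1), ((k j - 1) + (j:ℕ)))
          * (W.det * ((-1:R)^(K-(n+1)) * (-1:R)^(K-(n+1)))) := by rw [hsq, mul_one]
    _ = ((-1:R) ^ (∑ j : Fin (n+1), ((k j - 1) + (j:ℕ))) * (-1:R)^(K-(n+1)))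
          * (W.det * (-1:R)^(K-(n+1))) := by ring
    _ = ((-1:R) ^ (∑ j : Fin (n+1), ((k j - 1) + (j:ℕ))) * (-1:R)^(K-(n+1)))
          * ((Matrix.vandermonde x).det * (P.submatrix ρ id).det) := by rw [hmul]
    _ = (-1 : R) ^ ((n+1) * n / 2 + ∑ i : Fin n, k (Fin.castSucc i)) *
          (P.submatrix ρ id).det * (Matrix.vandermonde x).det := by rw [hC]; ring
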